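/- arXiv:2403.05120 — 2 statements merged into one kernel-verified Lean document; each statement's English description precedes it below -/
import Mathlib

section
/- If u and v are false twins in a graph G (i.e., N(u) = N(v)) and S is a general position set of G with S ∩ {u,v} = {u}, then (S \ {u}) ∪ {v} is also a general position set of G. -/
open SimpleGraph

variable {V : Type*}

/-- A walk is a shortest path if it is a path and its length equals the distance
between its endpoints. -/
def SimpleGraph.IsShortestPath (G : SimpleGraph V) {u v : V} (p : G.Walk u v) : Prop :=
  p.IsPath ∧ p.length = G.dist u v

/-- `S` is a general position set: no three vertices of `S` lie on a common shortest path. -/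
def SimpleGraph.IsGPSet (G : SimpleGraph V) (S : Set V) : Prop :=
  ∀ ⦃u v : V⦄ (p : G.Walk u v), G.IsShortestPath p →
    ∀ x ∈ S, ∀ y ∈ S, ∀ z ∈ S, x ≠ y → x ≠ z → y ≠ z →
      ¬ (x ∈ p.support ∧ y ∈ p.support ∧ z ∈ p.support)

/-- `u` and `v` are `S`-visible: some shortest `u,v`-path has no internal vertex in `S`. -/
def SimpleGraph.SVisible (G : SimpleGraph V) (S : Set V) (u v : V) : Prop :=
  ∃ p : G.Walk u v, G.IsShortestPath p ∧ ∀ w ∈ p.support, w ≠ u → w ≠ v → w ∉ S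

/-- `S` is a mutual-visibility set. -/
def SimpleGraph.IsMVSet (G : SimpleGraph V) (S : Set V) : Prop :=
  ∀ u ∈ S, ∀ v ∈ S, u ≠ v → G.SVisible S u v

/-- `S` is a total mutual-visibility set. -/
def SimpleGraph.IsTotalMVSet (G : SimpleGraph V) (S : Set V) : Prop :=
  ∀ u v : V, u ≠ v → G.SVisible S u v

/-- `S` is an outer mutual-visibility set. -/
def SimpleGraph.IsOuterMVSet (G : SimpleGraph V) (S : Set V) : Prop :=
  G.IsMVSet S ∧ ∀ u ∈ S, ∀ v ∉ S, u ≠ v → G.SVisible S u v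

/-- The mutual-visibility number `μ(G)`. -/
noncomputable def SimpleGraph.mutualVisibilityNumber (G : SimpleGraph V) [Fintype V] : ℕ :=
  sSup {k | ∃ S : Finset V, G.IsMVSet ↑S ∧ S.card = k}

/-- The total mutual-visibility number `μ_t(G)`. -/
noncomputable def SimpleGraph.totalMutualVisibilityNumber (G : SimpleGraph V) [Fintype V] : ℕ :=
  sSup {k | ∃ S : Finset V, G.IsTotalMVSet ↑S ∧ S.card = k}

/-- The outer mutual-visibility number `μ_o(G)`. -/
noncomputable def SimpleGraph.outerMutualVisibilityNumber (G : SimpleGraph V) [Fintype V] : ℕ :=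
  sSup {k | ∃ S : Finset V, G.IsOuterMVSet ↑S ∧ S.card = k}

/-- The general position number `gp(G)`. -/
noncomputable def SimpleGraph.gpNumber (G : SimpleGraph V) [Fintype V] : ℕ :=
  sSup {k | ∃ S : Finset V, G.IsGPSet ↑S ∧ S.card = k}

/-- The double graph `D(G)`: two copies of each vertex, `(u, b)` adjacent to `(v, c)`
iff `u` adjacent to `v` in `G`. -/
def SimpleGraph.doubleGraph (G : SimpleGraph V) : SimpleGraph (V × Bool) where
  Adj x y := G.Adj x.1 y.1
  symm := ⟨fun _ _ h => G.adj_symm h⟩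
  loopless := ⟨fun x h => G.irrefl h⟩

/-- The Mycielskian `M(G)`: `some (u, false)` are the original vertices, `some (u, true)`
their copies, and `none` is the apex vertex `v*`. -/
def SimpleGraph.mycielskian (G : SimpleGraph V) : SimpleGraph (Option (V × Bool)) where
  Adj x y := match x, y with
    | some (u, false), some (v, false) => G.Adj u v
    | some (u, false), some (v, true) => G.Adj u v
    | some (u, true), some (v, false) => G.Adj u v
    | some (_, true), none => True
    | none, some (_, true) => True
    | _, _ => False
  symm := ⟨by
    rintro (_ | ⟨u, (_|_)⟩) (_ | ⟨v, (_|_)⟩) h <;>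
      first
        | exact h
        | exact G.adj_symm h⟩
  loopless := ⟨by
    rintro (_ | ⟨u, (_|_)⟩) h
    · exact h
    · exact G.irrefl h
    · exact h⟩

section aux

variable {G : SimpleGraph V} {u v : V} [DecidableEq V]

private lemma twin_swap_adj (htwin : G.neighborSet u = G.neighborSet v)
    {a b : V} (h : G.Adj a b) :
    G.Adj (Equiv.swap u v a) (Equiv.swap u v b) := by
  have key : ∀ w : V, G.Adj u w ↔ G.Adj v w := by
    intro w
    constructor <;> intro hw
    · have : w ∈ G.neighborSet u := hw
      rw [htwin] at this; exact this
    · have : w ∈ G.neighborSet v := hw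
      rw [← htwin] at this; exact this
  have huv : ¬ G.Adj u v := by
    intro h'
    exact G.irrefl ((key v).mp h')
  rcases eq_or_ne a u with rfl | hau
  · rw [Equiv.swap_apply_left]
    rcases eq_or_ne b a with rfl | hba
    · exact absurd h G.irrefl
    rcases eq_or_ne b v with rfl | hbv
    · exact absurd h huv
    · rw [Equiv.swap_apply_of_ne_of_ne hba hbv]
      exact (key b).mp h
  rcases eq_or_ne a v with rfl | hav
  · rw [Equiv.swap_apply_right]
    rcases eq_or_ne b u with rfl | hbu
    · exact absurd h.symm huv
    rcases eq_or_ne b a with rfl | hbv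
    · exact absurd h G.irrefl
    · rw [Equiv.swap_apply_of_ne_of_ne hbu hbv]
      exact (key b).mpr h
  rw [Equiv.swap_apply_of_ne_of_ne hau hav]
  rcases eq_or_ne b u with rfl | hbu
  · rw [Equiv.swap_apply_left]
    exact ((key a).mp h.symm).symm
  rcases eq_or_ne b v with rfl | hbv
  · rw [Equiv.swap_apply_right]
    exact ((key a).mpr h.symm).symm
  rw [Equiv.swap_apply_of_ne_of_ne hbu hbv]
  exact h

/-- The swap of false twins as a graph automorphism. -/
private def twinSwapIso (htwin : G.neighborSet u = G.neighborSet v) : G ≃g G where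
  toEquiv := Equiv.swap u v
  map_rel_iff' := by
    intro a b
    constructor
    · intro h
      have := twin_swap_adj htwin h
      simpa using this
    · exact twin_swap_adj htwin

private lemma twin_swap_dist (htwin : G.neighborSet u = G.neighborSet v)
    (hconn : G.Connected) (a b : V) :
    G.dist (Equiv.swap u v a) (Equiv.swap u v b) = G.dist a b := by
  have key : ∀ a b : V, G.dist (Equiv.swap u v a) (Equiv.swap u v b) ≤ G.dist a b := by
    intro a b
    obtain ⟨p, hp⟩ := hconn.exists_walk_length_eq_dist a b
    calc G.dist (Equiv.swap u v a) (Equiv.swap u v b)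
        ≤ (p.map (twinSwapIso htwin).toHom).length := SimpleGraph.dist_le _
      _ = p.length := p.length_map _
      _ = G.dist a b := hp
  refine le_antisymm (key a b) ?_
  have := key (Equiv.swap u v a) (Equiv.swap u v b)
  simpa using this

end aux

theorem false_twins_gp (G : SimpleGraph V) (hconn : G.Connected) (u v : V)
    (htwin : G.neighborSet u = G.neighborSet v) (S : Set V)
    (hS : G.IsGPSet S) (hSuv : S ∩ {u, v} = {u}) :
    G.IsGPSet ((S \ {u}) ∪ {v}) := by
  classical
  have huS : u ∈ S := by
    have : u ∈ S ∩ {u, v} := hSuv ▸ rfl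
    exact this.1
  rcases eq_or_ne u v with rfl | huv
  · have : (S \ {u}) ∪ {u} = S := by
      ext x; by_cases hx : x = u <;> simp [hx, huS]
    rwa [this]
  have hvS : v ∉ S := by
    intro hv
    have : v ∈ S ∩ {u, v} := ⟨hv, Or.inr rfl⟩
    rw [hSuv] at this
    exact huv this.symm
  -- membership transfer under swap
  have hmem : ∀ x ∈ (S \ {u}) ∪ {v}, Equiv.swap u v x ∈ S := by
    rintro x (⟨hxS, hxu⟩ | hxv)
    · have hxu' : x ≠ u := hxu
      have hxv' : x ≠ v := fun h => hvS (h ▸ hxS)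
      rwa [Equiv.swap_apply_of_ne_of_ne hxu' hxv']
    · have : x = v := hxv
      rw [this, Equiv.swap_apply_right]
      exact huS
  intro a b p hp x hx y hy z hz hxy hxz hyz habs
  obtain ⟨hxp, hyp, hzp⟩ := habs
  set f := (twinSwapIso htwin).toHom with hf
  have hfinj : Function.Injective f := (Equiv.swap u v).injective
  have hq : G.IsShortestPath (p.map f) := by
    refine ⟨SimpleGraph.Walk.map_isPath_of_injective hfinj hp.1, ?_⟩
    rw [p.length_map, hp.2]
    exact (twin_swap_dist htwin hconn a b).symm
  refine hS (p.map f) hq _ (hmem x hx) _ (hmem y hy) _ (hmem z hz)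
    (fun h => hxy (hfinj h)) (fun h => hxz (hfinj h)) (fun h => hyz (hfinj h)) ?_
  refine ⟨?_, ?_, ?_⟩ <;> rw [SimpleGraph.Walk.support_map] <;>
    exact List.mem_map_of_mem (f := f) ‹_›
end

section
/- For every n ≥ 2, gp(D(K_n)) = n. -/
open SimpleGraph

variable {V : Type*}

lemma doubleGraph_top_adj {n : ℕ} (x y : Fin n × Bool) :
    (⊤ : SimpleGraph (Fin n)).doubleGraph.Adj x y ↔ x.1 ≠ y.1 := by
  simp [SimpleGraph.doubleGraph]

lemma doubleGraph_dist_le_two {n : ℕ} (hn : 2 ≤ n) (x y : Fin n × Bool) :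
    (⊤ : SimpleGraph (Fin n)).doubleGraph.dist x y ≤ 2 := by
  by_cases hxy : x = y
  · subst hxy; simp [SimpleGraph.dist_self]
  by_cases h : x.1 = y.1
  · obtain ⟨i, hi⟩ := Fintype.exists_ne_of_one_lt_card (by simp; omega) x.1
    have h1 : (⊤ : SimpleGraph (Fin n)).doubleGraph.Adj x (i, true) :=
      (doubleGraph_top_adj _ _).mpr (Ne.symm hi)
    have h2 : (⊤ : SimpleGraph (Fin n)).doubleGraph.Adj (i, true) y :=
      (doubleGraph_top_adj _ _).mpr (by simpa [← h] using hi)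
    exact SimpleGraph.dist_le (Walk.cons h1 (Walk.cons h2 Walk.nil))
  · have h1 : (⊤ : SimpleGraph (Fin n)).doubleGraph.Adj x y := (doubleGraph_top_adj _ _).mpr h
    calc (⊤ : SimpleGraph (Fin n)).doubleGraph.dist x y ≤ 1 :=
          SimpleGraph.dist_le (Walk.cons h1 Walk.nil)
      _ ≤ 2 := by omega

theorem gp_double_complete (n : ℕ) (hn : 2 ≤ n) :
    (⊤ : SimpleGraph (Fin n)).doubleGraph.gpNumber = n := by
  set G := (⊤ : SimpleGraph (Fin n)).doubleGraph with hGdef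
  have hmem : n ∈ {k | ∃ S : Finset (Fin n × Bool), G.IsGPSet ↑S ∧ S.card = k} := by
    refine ⟨Finset.univ.image (fun i => (i, true)), ?_, ?_⟩
    · rintro u v p hp x hx y hy z hz hxy hxz hyz ⟨hxs, hys, hzs⟩
      have hsnd : ∀ w : Fin n × Bool,
          w ∈ (↑(Finset.univ.image (fun i : Fin n => (i, true))) : Set (Fin n × Bool)) →
          w.2 = true := by
        intro w hw
        simp only [Finset.coe_image, Finset.coe_univ, Set.image_univ, Set.mem_range] at hw
        obtain ⟨i, rfl⟩ := hw; rfl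
      have hlen : p.length = G.dist u v := hp.2
      have hle : p.length ≤ 2 := hlen ▸ doubleGraph_dist_le_two hn u v
      have hnodup : p.support.Nodup := hp.1.support_nodup
      have hsub : ({x, y, z} : Finset (Fin n × Bool)) ⊆ p.support.toFinset := by
        intro a ha
        simp only [Finset.mem_insert, Finset.mem_singleton] at ha
        rcases ha with rfl | rfl | rfl <;> simpa using (by assumption : a ∈ p.support)
      have hcard3 : ({x, y, z} : Finset (Fin n × Bool)).card = 3 := by
        rw [Finset.card_insert_of_notMem (by simp [hxy, hxz]),
          Finset.card_insert_of_notMem (by simp [hyz]), Finset.card_singleton]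
      have hlensup : p.support.toFinset.card = p.support.length :=
        List.toFinset_card_of_nodup hnodup
      have h3 : 3 ≤ p.support.length := by
        have := Finset.card_le_card hsub
        omega
      rw [SimpleGraph.Walk.length_support] at h3
      have hlen2 : p.length = 2 := by omega
      have heq : ({x, y, z} : Finset (Fin n × Bool)) = p.support.toFinset := by
        apply Finset.eq_of_subset_of_card_le hsub
        rw [hlensup, SimpleGraph.Walk.length_support, hlen2, hcard3]
      have hu : u ∈ ({x, y, z} : Finset (Fin n × Bool)) := by
        rw [heq]; simpa using p.start_mem_support
      have hv : v ∈ ({x, y, z} : Finset (Fin n × Bool)) := by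
        rw [heq]; simpa using p.end_mem_support
      have huS : u.2 = true := by
        simp only [Finset.mem_insert, Finset.mem_singleton] at hu
        rcases hu with rfl | rfl | rfl
        exacts [hsnd _ hx, hsnd _ hy, hsnd _ hz]
      have hvS : v.2 = true := by
        simp only [Finset.mem_insert, Finset.mem_singleton] at hv
        rcases hv with rfl | rfl | rfl
        exacts [hsnd _ hx, hsnd _ hy, hsnd _ hz]
      have hdist2 : G.dist u v = 2 := by omega
      have hne : u ≠ v := by
        rintro rfl
        rw [SimpleGraph.dist_self] at hdist2
        omega
      have hnadj : ¬ G.Adj u v := by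
        intro hadj
        have := SimpleGraph.dist_eq_one_iff_adj.mpr hadj
        omega
      have h1 : u.1 = v.1 := by
        by_contra h
        exact hnadj ((doubleGraph_top_adj _ _).mpr h)
      exact hne (Prod.ext h1 (huS.trans hvS.symm))
    · rw [Finset.card_image_of_injective _ (fun a b h => (Prod.mk.injEq _ _ _ _ ▸ h).1)]
      simp
  have hub : ∀ k ∈ {k | ∃ S : Finset (Fin n × Bool), G.IsGPSet ↑S ∧ S.card = k}, k ≤ n := by
    rintro k ⟨S, hS, rfl⟩
    by_cases hinj : Set.InjOn Prod.fst (↑S : Set (Fin n × Bool))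
    · have := Finset.card_le_card_of_injOn Prod.fst
        (fun x _ => Finset.mem_univ x.1) hinj
      simpa using this
    · rw [Set.InjOn] at hinj
      push_neg at hinj
      obtain ⟨a, ha, b, hb, hab1, hab⟩ := hinj
      have hsub : S ⊆ {a, b} := by
        intro z hz
        by_contra hzmem
        simp only [Finset.mem_insert, Finset.mem_singleton, not_or] at hzmem
        obtain ⟨hza, hzb⟩ := hzmem
        have hz1a : z.1 ≠ a.1 := by
          intro h
          obtain ⟨a1, a2⟩ := a; obtain ⟨b1, b2⟩ := b; obtain ⟨z1, z2⟩ := z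
          simp only at h hab1
          subst h; subst hab1
          cases a2 <;> cases b2 <;> cases z2 <;> simp_all
        have hz1b : z.1 ≠ b.1 := hab1 ▸ hz1a
        have h1 : G.Adj a z := (doubleGraph_top_adj _ _).mpr (Ne.symm hz1a)
        have h2 : G.Adj z b := (doubleGraph_top_adj _ _).mpr hz1b
        set p : G.Walk a b := Walk.cons h1 (Walk.cons h2 Walk.nil) with hp
        have hpath : p.IsPath := by
          rw [SimpleGraph.Walk.isPath_def]
          simp [hp, hab, Ne.symm hza, hzb]
        have hdle : G.dist a b ≤ 2 := SimpleGraph.dist_le p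
        have hd0 : G.dist a b ≠ 0 := by
          rw [SimpleGraph.dist_ne_zero_iff_ne_and_reachable]
          exact ⟨hab, p.reachable⟩
        have hd1 : G.dist a b ≠ 1 := by
          intro h
          exact ((doubleGraph_top_adj _ _).mp (SimpleGraph.dist_eq_one_iff_adj.mp h)) hab1
        have hd2 : G.dist a b = 2 := by omega
        have hsp : G.IsShortestPath p := ⟨hpath, by rw [hd2]; rfl⟩
        exact hS p hsp a ha z hz b hb (Ne.symm hza) hab hzb
          ⟨by simp [hp], by simp [hp], by simp [hp]⟩
      calc S.card ≤ ({a, b} : Finset (Fin n × Bool)).card := Finset.card_le_card hsub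
        _ ≤ 2 := Finset.card_insert_le _ _ |>.trans (by simp)
        _ ≤ n := hn
  exact le_antisymm (csSup_le ⟨n, hmem⟩ hub) (le_csSup ⟨n, hub⟩ hmem)
end
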